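/- For all k, l ∈ ℤ^d and all x ∈ C_k, y ∈ C_l (with x ≠ y when k = l), the cell-averaged potential approximates the potential with error |J(x−y) − J̄(k,l)| ≤ 2√d (q / L^{d+1}) ‖∇V‖_∞. -/

import Mathlib

open Finset

/-- The pair potential `J(z) = L⁻ᵈ V((n/L) z)` as a function of the difference vector. -/
noncomputable def Jfun (d n : ℕ) (L : ℝ) (V : EuclideanSpace ℝ (Fin d) → ℝ)
    (z : EuclideanSpace ℝ (Fin d)) : ℝ :=
  (1 / L ^ d) * V (((n : ℝ) / L) • z)

/-- The lattice point `(q·k + a)/n ∈ (1/n)ℤᵈ` of the coarse cell `C_k` with offset `a`. -/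
noncomputable def latpos (d n q : ℕ) (k : Fin d → ℤ) (a : Fin d → Fin q) :
    EuclideanSpace ℝ (Fin d) :=
  WithLp.toLp 2 (fun i => ((q : ℝ) * (k i : ℝ) + ((a i : ℕ) : ℝ)) / (n : ℝ))

/-- Averaging error bound: the distance of a value `J0` to an average of values,
each within `c` of `J0`, is at most `c`. -/
theorem avg_err {ι κ : Type*} (s : Finset ι) (t : ι → Finset κ) (f : ι → κ → ℝ) (J0 c N : ℝ)
    (hN : 0 < N)
    (hcard : ((∑ i ∈ s, (t i).card : ℕ) : ℝ) = N)
    (h : ∀ i ∈ s, ∀ j ∈ t i, |f i j - J0| ≤ c) :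
    |J0 - (∑ i ∈ s, ∑ j ∈ t i, f i j) / N| ≤ c := by
  have expand : ∑ i ∈ s, ∑ j ∈ t i, (f i j - J0)
      = (∑ i ∈ s, ∑ j ∈ t i, f i j) - N * J0 := by
    rw [← hcard]
    push_cast
    rw [Finset.sum_mul]
    rw [← Finset.sum_sub_distrib]
    apply Finset.sum_congr rfl
    intro i _
    rw [Finset.sum_sub_distrib, Finset.sum_const, nsmul_eq_mul]
  have key : |∑ i ∈ s, ∑ j ∈ t i, (f i j - J0)| ≤ N * c := by
    calc |∑ i ∈ s, ∑ j ∈ t i, (f i j - J0)|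
        ≤ ∑ i ∈ s, |∑ j ∈ t i, (f i j - J0)| := Finset.abs_sum_le_sum_abs _ _
      _ ≤ ∑ i ∈ s, ∑ j ∈ t i, |f i j - J0| :=
          Finset.sum_le_sum fun i _ => Finset.abs_sum_le_sum_abs _ _
      _ ≤ ∑ i ∈ s, ∑ j ∈ t i, c :=
          Finset.sum_le_sum fun i hi => Finset.sum_le_sum fun j hj => h i hi j hj
      _ = N * c := by
          simp only [Finset.sum_const, nsmul_eq_mul]
          rw [← Finset.sum_mul, ← hcard]
          push_cast; ring
  have heq : J0 - (∑ i ∈ s, ∑ j ∈ t i, f i j) / N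
      = -(∑ i ∈ s, ∑ j ∈ t i, (f i j - J0)) / N := by
    rw [expand]; field_simp; ring
  rw [heq, abs_div, abs_neg, abs_of_pos hN, div_le_iff₀ hN]
  linarith [key]

/-- Componentwise bound gives a Euclidean norm bound. -/
theorem euclid_norm_le (d : ℕ) (C : ℝ) (hC : 0 ≤ C) (x : EuclideanSpace ℝ (Fin d))
    (h : ∀ i, |x i| ≤ C) : ‖x‖ ≤ Real.sqrt d * C := by
  rw [EuclideanSpace.norm_eq]
  have hrw : Real.sqrt d * C = Real.sqrt (d * C ^ 2) := by
    rw [Real.sqrt_mul (by positivity), Real.sqrt_sq hC]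
  rw [hrw]
  apply Real.sqrt_le_sqrt
  calc ∑ i, ‖x i‖ ^ 2 ≤ ∑ _i : Fin d, C ^ 2 := by
        apply Finset.sum_le_sum
        intro i _
        have := h i
        rw [Real.norm_eq_abs]
        nlinarith [abs_nonneg (x i)]
    _ = d * C ^ 2 := by simp [Finset.card_univ]

/-- The basic pairwise bound: two lattice differences with sites in the same pair of
cells give potential values within `2√d (q/L^{d+1}) GV` of each other. -/
theorem pair_bound (d m q : ℕ) (hm : 1 ≤ m) (hq : 1 ≤ q)
    (L : ℝ) (hL : 1 ≤ L)
    (V : EuclideanSpace ℝ (Fin d) → ℝ) (hV : ContDiff ℝ 1 V)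
    (GV : ℝ) (hGV : ∀ z, ‖gradient V z‖ ≤ GV)
    (k l : Fin d → ℤ) (a b a' b' : Fin d → Fin q) :
    |Jfun d (m * q) L V (latpos d (m * q) q k a - latpos d (m * q) q l b)
      - Jfun d (m * q) L V (latpos d (m * q) q k a' - latpos d (m * q) q l b')|
      ≤ 2 * Real.sqrt d * ((q : ℝ) / L ^ (d + 1)) * GV := by
  have hL0 : (0:ℝ) < L := lt_of_lt_of_le one_pos hL
  have hGV0 : 0 ≤ GV := le_trans (norm_nonneg _) (hGV 0)
  have hn : 0 < m * q := Nat.mul_pos hm hq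
  have hnR : (0:ℝ) < ((m * q : ℕ) : ℝ) := by exact_mod_cast hn
  have hneR : ((m * q : ℕ) : ℝ) ≠ 0 := ne_of_gt hnR
  have hqR : (0:ℝ) < (q:ℝ) := by exact_mod_cast hq
  -- Lipschitz bound on V
  have hlip : ∀ x y : EuclideanSpace ℝ (Fin d), |V x - V y| ≤ GV * ‖x - y‖ := by
    intro x y
    have h := Convex.norm_image_sub_le_of_norm_fderiv_le
      (f := V) (C := GV) (s := Set.univ)
      (fun z _ => (hV.differentiable one_ne_zero).differentiableAt)
      (fun z _ => by
        rw [show ‖fderiv ℝ V z‖ = ‖gradient V z‖ by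
          rw [gradient]; exact ((InnerProductSpace.toDual ℝ _).symm.norm_map _).symm]
        exact hGV z)
      convex_univ (Set.mem_univ y) (Set.mem_univ x)
    simpa [Real.norm_eq_abs] using h
  set z := latpos d (m * q) q k a - latpos d (m * q) q l b with hz
  set w := latpos d (m * q) q k a' - latpos d (m * q) q l b' with hw
  -- componentwise bound on z - w
  have hcomp : ∀ i, |(z - w) i| ≤ 2 * (q:ℝ) / ((m * q : ℕ) : ℝ) := by
    intro i
    have hzwi : (z - w) i = (((a i : ℕ) : ℝ) - ((a' i : ℕ) : ℝ)
        - ((b i : ℕ) : ℝ) + ((b' i : ℕ) : ℝ)) / ((m * q : ℕ) : ℝ) := by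
      show z i - w i = _
      rw [hz, hw]
      show latpos d (m * q) q k a i - latpos d (m * q) q l b i
          - (latpos d (m * q) q k a' i - latpos d (m * q) q l b' i) = _
      unfold latpos
      simp only [PiLp.toLp_apply]
      field_simp
      ring
    rw [hzwi, abs_div, abs_of_pos hnR]
    rw [div_le_div_iff_of_pos_right hnR]
    have h1 : ((a i : ℕ) : ℝ) < q := by exact_mod_cast (a i).is_lt
    have h2 : ((a' i : ℕ) : ℝ) < q := by exact_mod_cast (a' i).is_lt
    have h3 : ((b i : ℕ) : ℝ) < q := by exact_mod_cast (b i).is_lt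
    have h4 : ((b' i : ℕ) : ℝ) < q := by exact_mod_cast (b' i).is_lt
    have h5 : (0:ℝ) ≤ ((a i : ℕ) : ℝ) := Nat.cast_nonneg _
    have h6 : (0:ℝ) ≤ ((a' i : ℕ) : ℝ) := Nat.cast_nonneg _
    have h7 : (0:ℝ) ≤ ((b i : ℕ) : ℝ) := Nat.cast_nonneg _
    have h8 : (0:ℝ) ≤ ((b' i : ℕ) : ℝ) := Nat.cast_nonneg _
    rw [abs_le]
    constructor <;> linarith
  have hnorm : ‖z - w‖ ≤ Real.sqrt d * (2 * (q:ℝ) / ((m * q : ℕ) : ℝ)) :=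
    euclid_norm_le d _ (by positivity) _ hcomp
  have hc0 : (0:ℝ) ≤ ((m * q : ℕ) : ℝ) / L := by positivity
  calc |Jfun d (m * q) L V z - Jfun d (m * q) L V w|
      = (1 / L ^ d) * |V ((((m * q : ℕ) : ℝ) / L) • z) - V ((((m * q : ℕ) : ℝ) / L) • w)| := by
        rw [Jfun, Jfun, ← mul_sub, abs_mul, abs_of_pos (by positivity)]
    _ ≤ (1 / L ^ d) * (GV * ‖(((m * q : ℕ) : ℝ) / L) • z - (((m * q : ℕ) : ℝ) / L) • w‖) := by
        apply mul_le_mul_of_nonneg_left (hlip _ _) (by positivity)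
    _ = (1 / L ^ d) * (GV * ((((m * q : ℕ) : ℝ) / L) * ‖z - w‖)) := by
        rw [← smul_sub, norm_smul, Real.norm_eq_abs, abs_of_nonneg hc0]
    _ ≤ (1 / L ^ d) * (GV * ((((m * q : ℕ) : ℝ) / L) * (Real.sqrt d * (2 * (q:ℝ) / ((m * q : ℕ) : ℝ))))) := by
        gcongr
    _ = 2 * Real.sqrt d * ((q : ℝ) / L ^ (d + 1)) * GV := by
        field_simp
        ring

/-- **Lemma on the cell-averaging error of the potential:** for all cells `k, l ∈ ℤᵈ` and
sites `x ∈ C_k`, `y ∈ C_l` (with `x ≠ y` when `k = l`),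
`|J(x−y) − J̄(k,l)| ≤ 2√d (q/L^{d+1}) ‖∇V‖_∞`. -/
theorem potential_average_error
    (d : ℕ) (hd : 1 ≤ d) (m q : ℕ) (hm : 1 ≤ m) (hq : 1 ≤ q) (hQ : 2 ≤ q ^ d)
    (L : ℝ) (hL : 1 ≤ L)
    (V : EuclideanSpace ℝ (Fin d) → ℝ) (hV : ContDiff ℝ 1 V)
    (GV : ℝ) (hGV : ∀ z, ‖gradient V z‖ ≤ GV)
    (Jbar : (Fin d → ℤ) → (Fin d → ℤ) → ℝ)
    (hJbar : ∀ k l, Jbar k l =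
      if k = l then
        (∑ a : Fin d → Fin q, ∑ b ∈ Finset.univ.filter (fun b => b ≠ a),
            Jfun d (m * q) L V (latpos d (m * q) q k a - latpos d (m * q) q k b))
          / (((q : ℝ) ^ d) * ((q : ℝ) ^ d - 1))
      else
        (∑ a : Fin d → Fin q, ∑ b : Fin d → Fin q,
            Jfun d (m * q) L V (latpos d (m * q) q k a - latpos d (m * q) q l b))
          / ((q : ℝ) ^ d) ^ 2) :
    ∀ (k l : Fin d → ℤ) (a b : Fin d → Fin q), (k = l → a ≠ b) →
      |Jfun d (m * q) L V (latpos d (m * q) q k a - latpos d (m * q) q l b) - Jbar k l|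
        ≤ 2 * Real.sqrt d * ((q : ℝ) / L ^ (d + 1)) * GV := by
  intro k l a b hab
  have hQR : (2:ℝ) ≤ (q:ℝ) ^ d := by exact_mod_cast hQ
  have hcardfun : Fintype.card (Fin d → Fin q) = q ^ d := by
    simp [Fintype.card_fun]
  rw [hJbar]
  by_cases hkl : k = l
  · subst hkl
    rw [if_pos rfl]
    apply avg_err _ _ _ _ _ _ (by nlinarith)
    · rw [Nat.cast_sum]
      have hterm : ∀ a' : Fin d → Fin q,
          ((Finset.univ.filter (fun b => b ≠ a')).card : ℝ) = (q:ℝ) ^ d - 1 := by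
        intro a'
        rw [Finset.filter_ne', Finset.card_erase_of_mem (Finset.mem_univ _),
          Finset.card_univ, hcardfun]
        have h1 : 1 ≤ q ^ d := le_trans one_le_two hQ
        push_cast [Nat.cast_sub h1]
        ring
      rw [Finset.sum_congr rfl (fun a' _ => hterm a'), Finset.sum_const, nsmul_eq_mul,
        Finset.card_univ, hcardfun]
      push_cast
      ring
    · intro a' _ b' _
      rw [abs_sub_comm]
      exact pair_bound d m q hm hq L hL V hV GV hGV k k a b a' b'
  · rw [if_neg hkl]
    apply avg_err _ _ _ _ _ _ (by positivity)
    · simp [Finset.card_univ, hcardfun]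
      push_cast
      ring
    · intro a' _ b' _
      rw [abs_sub_comm]
      exact pair_bound d m q hm hq L hL V hV GV hGV k l a b a' b'
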